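/- arXiv:2205.02365 — 2 statements merged into one kernel-verified Lean document; each statement's English description precedes it below -/
import Mathlib

section
/- The map sending the 4×4 Kronecker product ([[1,v₁],[0,z₁]] ⊗ [[1,v₂],[0,z₂]]) to its upper-left 3×3 submatrix is multiplicative: the submatrix of a product of two such Kronecker products equals the product of their submatrices. -/
open Kronecker

/-- The first three indices of `Fin 2 × Fin 2` in lexicographic order:
`0 ↦ (0,0)`, `1 ↦ (0,1)`, `2 ↦ (1,0)`. -/
def subIdx : Fin 3 → Fin 2 × Fin 2 := ![(0, 0), (0, 1), (1, 0)]

/-- Taking the upper-left 3×3 submatrix of a 4×4 Kronecker product of 2×2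
upper-triangular matrices with unit `(1,1)` entry is multiplicative. -/
theorem subflattening_submatrix_multiplicative (v₁ z₁ v₂ z₂ v₁' z₁' v₂' z₂' : ℝ) :
    ((((!![1, v₁; 0, z₁] : Matrix (Fin 2) (Fin 2) ℝ) ⊗ₖ !![1, v₂; 0, z₂]) *
        ((!![1, v₁'; 0, z₁'] : Matrix (Fin 2) (Fin 2) ℝ) ⊗ₖ !![1, v₂'; 0, z₂'])).submatrix
          subIdx subIdx) =
      (((!![1, v₁; 0, z₁] : Matrix (Fin 2) (Fin 2) ℝ) ⊗ₖ !![1, v₂; 0, z₂]).submatrix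
          subIdx subIdx) *
        (((!![1, v₁'; 0, z₁'] : Matrix (Fin 2) (Fin 2) ℝ) ⊗ₖ !![1, v₂'; 0, z₂']).submatrix
          subIdx subIdx) := by
  ext i j
  simp only [Matrix.mul_apply, Matrix.submatrix_apply]
  fin_cases i <;> fin_cases j <;>
    simp [subIdx, Matrix.mul_apply, Matrix.kroneckerMap_apply, Fintype.sum_prod_type, Fin.sum_univ_two, Fin.sum_univ_three,
      Matrix.submatrix_apply, Matrix.vecHead, Matrix.vecTail] <;> ring
end

section
/- For any two distinct splits {A,B} and {A',B'} of a set X that are both displayed by a common tree T (i.e., compatible), at least one of the intersections A∩A', A∩B', B∩A', B∩B' is empty. -/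
/-- A tree `T` with vertex set `V` and leaf labeling `f : X → V` displays the split
`{A, B}` of `X` if there is an edge `{u, v}` of `T` such that, after deleting that edge,
`A` is exactly the set of taxa whose vertex lies in the component of `u`, and `B` is
exactly the set of taxa whose vertex lies in the component of `v`. -/
def Displays {V X : Type*} (T : SimpleGraph V) (f : X → V) (A B : Set X) : Prop :=
  ∃ u v : V, T.Adj u v ∧
    (∀ x : X, x ∈ A ↔ (T.deleteEdges {s(u, v)}).Reachable (f x) u) ∧
    (∀ x : X, x ∈ B ↔ (T.deleteEdges {s(u, v)}).Reachable (f x) v)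

open SimpleGraph

lemma walk_reach_aux {V : Type*} {T : SimpleGraph V} (u v : V) {x y : V} (w : T.Walk x y) :
    (T.deleteEdges {s(u, v)}).Reachable x u ∨ (T.deleteEdges {s(u, v)}).Reachable x v ∨
      (T.deleteEdges {s(u, v)}).Reachable x y := by
  induction w with
  | nil => exact Or.inr (Or.inr (Reachable.refl _))
  | cons h p ih =>
    rename_i a b c
    by_cases he : s(a, b) = s(u, v)
    · rw [Sym2.eq_iff] at he
      rcases he with ⟨rfl, rfl⟩ | ⟨rfl, rfl⟩
      · exact Or.inl (Reachable.refl _)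
      · exact Or.inr (Or.inl (Reachable.refl _))
    · have hadj : (T.deleteEdges {s(u, v)}).Adj a b := by
        rw [deleteEdges_adj]
        exact ⟨h, by simpa using he⟩
      refine ih.imp (fun r => hadj.reachable.trans r)
        (fun r => r.imp (fun r => hadj.reachable.trans r) (fun r => hadj.reachable.trans r))

/-- Deleting an edge of a connected graph, each vertex still reaches one of the endpoints. -/
lemma reach_side {V : Type*} {T : SimpleGraph V} (hc : T.Connected) (u v x : V) :
    (T.deleteEdges {s(u, v)}).Reachable x u ∨ (T.deleteEdges {s(u, v)}).Reachable x v := by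
  obtain ⟨w⟩ := hc x u
  rcases walk_reach_aux u v w with h | h | h
  · exact Or.inl h
  · exact Or.inr h
  · exact Or.inl h

lemma bridge_not_reach {V : Type*} {T : SimpleGraph V} (hT : T.IsTree) {u v : V}
    (huv : T.Adj u v) : ¬ (T.deleteEdges {s(u, v)}).Reachable u v := by
  have hb := (isAcyclic_iff_forall_edge_isBridge.mp hT.IsAcyclic) (T.mem_edgeSet.mpr huv)
  exact isBridge_iff.mp hb

lemma aux_key {V : Type*} {T : SimpleGraph V} (hT : T.IsTree) {u v u' v' : V}
    (huv : T.Adj u v) (huv' : T.Adj u' v')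
    (h1 : (T.deleteEdges {s(u, v)}).Reachable u' u)
    (h2 : (T.deleteEdges {s(u', v')}).Reachable v u')
    (x : V) (hx1 : (T.deleteEdges {s(u, v)}).Reachable x v)
    (hx2 : (T.deleteEdges {s(u', v')}).Reachable x v') : False := by
  classical
  have hb : ¬ (T.deleteEdges {s(u, v)}).Reachable u v := bridge_not_reach hT huv
  have hb' : ¬ (T.deleteEdges {s(u', v')}).Reachable u' v' := bridge_not_reach hT huv'
  obtain ⟨w⟩ := hx1
  have hu'ns : u' ∉ w.support := by
    intro hs
    exact hb (h1.symm.trans ⟨w.dropUntil u' hs⟩)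
  have hnotedge : s(u', v') ∉ w.edges := fun he =>
    hu'ns (SimpleGraph.Walk.fst_mem_support_of_mem_edges w he)
  have hsub : ∀ e ∈ w.edges, e ∈ (T.deleteEdges {s(u', v')}).edgeSet := by
    intro e he
    have h1' := w.edges_subset_edgeSet he
    rw [edgeSet_deleteEdges] at h1' ⊢
    refine ⟨h1'.1, ?_⟩
    simp only [Set.mem_singleton_iff]
    rintro rfl
    exact hnotedge he
  have hr : (T.deleteEdges {s(u', v')}).Reachable x v := ⟨w.transfer _ hsub⟩
  exact hb' (h2.symm.trans (hr.symm.trans hx2))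

/-- If two distinct splits `{A,B}` and `{A',B'}` of a taxon set `X` are both displayed
by a common tree `T` (so they are compatible), then at least one of the intersections
`A ∩ A'`, `A ∩ B'`, `B ∩ A'`, `B ∩ B'` is empty. -/
theorem compatible_splits_inter_empty {V X : Type*} (T : SimpleGraph V) (hT : T.IsTree)
    (f : X → V) (A B A' B' : Set X)
    (h : Displays T f A B) (h' : Displays T f A' B')
    (hne : ({A, B} : Set (Set X)) ≠ {A', B'}) :
    A ∩ A' = ∅ ∨ A ∩ B' = ∅ ∨ B ∩ A' = ∅ ∨ B ∩ B' = ∅ := by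
  obtain ⟨u, v, hadj, hA, hB⟩ := h
  obtain ⟨u', v', hadj', hA', hB'⟩ := h'
  -- the two edges are distinct
  have hedne : s(u, v) ≠ s(u', v') := by
    intro heq
    rw [Sym2.eq_iff] at heq
    rcases heq with ⟨rfl, rfl⟩ | ⟨rfl, rfl⟩
    · refine hne ?_
      rw [Set.ext fun x => (hA x).trans (hA' x).symm,
        Set.ext fun x => (hB x).trans (hB' x).symm]
    · refine hne ?_
      have e1 : A = B' := Set.ext fun x => by
        rw [hA x, hB' x, show s(v, u) = s(u, v) from Sym2.eq_swap]
      have e2 : B = A' := Set.ext fun x => by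
        rw [hB x, hA' x, show s(v, u) = s(u, v) from Sym2.eq_swap]
      rw [e1, e2]
      exact Set.pair_comm _ _
  have hc := hT.isConnected
  have hvu' : (T.deleteEdges {s(u, v)}).Adj u' v' := by
    rw [deleteEdges_adj]
    exact ⟨hadj', by simp only [Set.mem_singleton_iff]; exact fun hh => hedne hh.symm⟩
  rcases reach_side hc u v u' with hu'u | hu'v
  · -- u', v' on the u-side; B is contained in one side of (u',v')
    rcases reach_side hc u' v' v with hvu'' | hvv'
    · -- v reaches u' : B ∩ B' = ∅
      refine Or.inr (Or.inr (Or.inr ?_))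
      rw [Set.eq_empty_iff_forall_notMem]
      rintro x ⟨hxB, hxB'⟩
      exact aux_key hT hadj hadj' hu'u hvu'' (f x) ((hB x).mp hxB) ((hB' x).mp hxB')
    · -- v reaches v' : B ∩ A' = ∅
      refine Or.inr (Or.inr (Or.inl ?_))
      rw [Set.eq_empty_iff_forall_notMem]
      rintro x ⟨hxB, hxA'⟩
      refine aux_key hT hadj hadj'.symm (hvu'.symm.reachable.trans hu'u) ?_ (f x)
        ((hB x).mp hxB) ?_
      · rw [show s(v', u') = s(u', v') from Sym2.eq_swap]; exact hvv'
      · rw [show s(v', u') = s(u', v') from Sym2.eq_swap]; exact (hA' x).mp hxA'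
  · -- u', v' on the v-side
    rcases reach_side hc u' v' u with huu' | huv'
    · -- u reaches u' : A ∩ B' = ∅
      refine Or.inr (Or.inl ?_)
      rw [Set.eq_empty_iff_forall_notMem]
      rintro x ⟨hxA, hxB'⟩
      refine aux_key hT hadj.symm hadj' ?_ huu' (f x) ?_ ((hB' x).mp hxB')
      · rw [show s(v, u) = s(u, v) from Sym2.eq_swap]; exact hu'v
      · rw [show s(v, u) = s(u, v) from Sym2.eq_swap]; exact (hA x).mp hxA
    · -- u reaches v' : A ∩ A' = ∅
      refine Or.inl ?_
      rw [Set.eq_empty_iff_forall_notMem]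
      rintro x ⟨hxA, hxA'⟩
      refine aux_key hT hadj.symm hadj'.symm ?_ ?_ (f x) ?_ ?_
      · rw [show s(v, u) = s(u, v) from Sym2.eq_swap]
        exact hvu'.symm.reachable.trans hu'v
      · rw [show s(v', u') = s(u', v') from Sym2.eq_swap]; exact huv'
      · rw [show s(v, u) = s(u, v) from Sym2.eq_swap]; exact (hA x).mp hxA
      · rw [show s(v', u') = s(u', v') from Sym2.eq_swap]; exact (hA' x).mp hxA'
end
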